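/- Fix d ≥ 1, λ > 0, M ≥ 1 and k ≥ 1. Let f : ℝ^d → ℝ be differentiable, let x_1, …, x_k ∈ ℝ^d with ∇f(x_k) ≠ 0, and let s_1, …, s_{k−1} ∈ ℝ^d be unit vectors. Set ℓ(k) := max{1, k − M − 1}, C_k := λ I_d + Σ_{j=ℓ(k)}^{k−1} s_j s_jᵀ, b_k := Σ_{j=ℓ(k)}^{k−1} ⟨∇f(x_j), s_j⟩ s_j, g_k := C_k⁻¹ b_k, and β_k := √(d(M+1)/λ) · Σ_{i=ℓ(k)}^{k−1} ‖∇f(x_{i+1}) − ∇f(x_i)‖. Let U_k ≥ ‖∇f(x_k)‖, let s_k be a maximizer of the map s ↦ ⟨g_k, s⟩ + √λ · U_k · ‖s‖_{C_k⁻¹} over the unit sphere {s ∈ ℝ^d : ‖s‖ = 1}, and set s_k* := ∇f(x_k)/‖∇f(x_k)‖. Then ⟨s_k* − s_k, ∇f(x_k)⟩ ≤ 2β_k + 2√λ · U_k · ‖s_k‖_{C_k⁻¹}. -/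

import Mathlib

open Matrix Finset

/-- The Euclidean norm on `Fin n → ℝ`. -/
noncomputable def euclNorm {n : ℕ} (v : Fin n → ℝ) : ℝ := Real.sqrt (∑ i, v i ^ 2)

section Aux

variable {n : ℕ}

lemma euclNorm_sq (v : Fin n → ℝ) : euclNorm v ^ 2 = ∑ i, v i ^ 2 := by
  rw [euclNorm, Real.sq_sqrt (by positivity)]

lemma euclNorm_nonneg (v : Fin n → ℝ) : 0 ≤ euclNorm v := Real.sqrt_nonneg _

lemma euclNorm_eq_norm (v : Fin n → ℝ) :
    euclNorm v = ‖(WithLp.equiv 2 (Fin n → ℝ)).symm v‖ := by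
  rw [EuclideanSpace.norm_eq]
  simp [euclNorm, Real.norm_eq_abs, sq_abs]

lemma euclNorm_triangle (u v : Fin n → ℝ) :
    euclNorm (u + v) ≤ euclNorm u + euclNorm v := by
  simp only [euclNorm_eq_norm]
  rw [show (WithLp.equiv 2 (Fin n → ℝ)).symm (u + v) =
    (WithLp.equiv 2 (Fin n → ℝ)).symm u + (WithLp.equiv 2 (Fin n → ℝ)).symm v from rfl]
  exact norm_add_le _ _

lemma euclNorm_smul (c : ℝ) (v : Fin n → ℝ) :
    euclNorm (c • v) = |c| * euclNorm v := by
  simp only [euclNorm_eq_norm]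
  rw [show (WithLp.equiv 2 (Fin n → ℝ)).symm (c • v) =
    c • (WithLp.equiv 2 (Fin n → ℝ)).symm v from rfl]
  rw [norm_smul, Real.norm_eq_abs]

lemma euclNorm_pos {v : Fin n → ℝ} (hv : v ≠ 0) : 0 < euclNorm v := by
  rw [euclNorm_eq_norm, norm_pos_iff]
  simpa using hv

lemma euclNorm_zero : euclNorm (0 : Fin n → ℝ) = 0 := by simp [euclNorm]

lemma euclNorm_neg (v : Fin n → ℝ) : euclNorm (-v) = euclNorm v := by
  simp [euclNorm, neg_pow]

lemma abs_dot_le (u v : Fin n → ℝ) : |u ⬝ᵥ v| ≤ euclNorm u * euclNorm v := by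
  have h := sum_mul_sq_le_sq_mul_sq Finset.univ u v
  have h2 : (u ⬝ᵥ v) ^ 2 ≤ (euclNorm u * euclNorm v) ^ 2 := by
    rw [mul_pow, euclNorm_sq, euclNorm_sq]; exact h
  have h3 : 0 ≤ euclNorm u * euclNorm v := mul_nonneg (euclNorm_nonneg u) (euclNorm_nonneg v)
  nlinarith [abs_nonneg (u ⬝ᵥ v), sq_abs (u ⬝ᵥ v)]

lemma telescope (a : ℕ → Fin n → ℝ) (j : ℕ) (m : ℕ) :
    euclNorm (a (j + m) - a j) ≤ ∑ i ∈ Finset.Ico j (j + m), euclNorm (a (i+1) - a i) := by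
  induction m with
  | zero => simp [euclNorm_zero]
  | succ m ih =>
    have hsplit : a (j + (m+1)) - a j =
        (a (j + m + 1) - a (j + m)) + (a (j + m) - a j) := by
      rw [show j + (m+1) = j + m + 1 from rfl]; abel
    rw [hsplit, show j + (m+1) = j + m + 1 from rfl,
      Finset.sum_Ico_succ_top (Nat.le_add_right j m)]
    calc euclNorm _ ≤ euclNorm (a (j+m+1) - a (j+m)) + euclNorm (a (j+m) - a j) :=
          euclNorm_triangle _ _
      _ ≤ euclNorm (a (j+m+1) - a (j+m)) + ∑ i ∈ Finset.Ico j (j+m), euclNorm (a (i+1) - a i) :=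
          by linarith
      _ = _ := by ring

lemma symm_dot {A : Matrix (Fin n) (Fin n) ℝ} (hA : A.IsHermitian) (u v : Fin n → ℝ) :
    v ⬝ᵥ (A *ᵥ u) = u ⬝ᵥ (A *ᵥ v) := by
  have ht : Aᵀ = A := by simpa using hA.eq
  rw [dotProduct_mulVec, ← mulVec_transpose, ht, dotProduct_comm]

lemma psd_cs {A : Matrix (Fin n) (Fin n) ℝ} (hA : A.PosSemidef) (u v : Fin n → ℝ) :
    |u ⬝ᵥ (A *ᵥ v)| ≤ Real.sqrt (u ⬝ᵥ (A *ᵥ u)) * Real.sqrt (v ⬝ᵥ (A *ᵥ v)) := by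
  set a := v ⬝ᵥ (A *ᵥ v)
  set b := u ⬝ᵥ (A *ᵥ v)
  set c := u ⬝ᵥ (A *ᵥ u)
  have ha : 0 ≤ a := by simpa using hA.dotProduct_mulVec_nonneg v
  have hc : 0 ≤ c := by simpa using hA.dotProduct_mulVec_nonneg u
  have key : b ^ 2 ≤ c * a := by
    have hq : ∀ t : ℝ, 0 ≤ a * (t * t) + (2 * b) * t + c := by
      intro t
      have h0 : 0 ≤ (u + t • v) ⬝ᵥ (A *ᵥ (u + t • v)) := by simpa using hA.dotProduct_mulVec_nonneg (u + t • v)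
      have hexp : (u + t • v) ⬝ᵥ (A *ᵥ (u + t • v)) = a * (t * t) + (2 * b) * t + c := by
        have hsy : v ⬝ᵥ (A *ᵥ u) = b := (symm_dot hA.1 v u).symm
        simp only [mulVec_add, mulVec_smul, add_dotProduct, dotProduct_add,
          smul_dotProduct, dotProduct_smul, smul_eq_mul, hsy]
        ring
      linarith [hexp ▸ h0]
    have hd := discrim_le_zero hq
    rw [discrim] at hd
    nlinarith
  have : |b| ≤ Real.sqrt (c * a) := by
    rw [← Real.sqrt_sq_eq_abs]
    exact Real.sqrt_le_sqrt key
  rwa [Real.sqrt_mul hc] at this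

lemma vecMulVec_mulVec' (u v w : Fin n → ℝ) :
    vecMulVec u v *ᵥ w = (v ⬝ᵥ w) • u := by
  funext i
  simp only [mulVec, vecMulVec, dotProduct, of_apply, Pi.smul_apply, smul_eq_mul,
    Finset.sum_mul]
  exact Finset.sum_congr rfl fun j _ => by ring

lemma mulVec_sum_vec (t : Finset ℕ) (A : Matrix (Fin n) (Fin n) ℝ)
    (v : ℕ → Fin n → ℝ) : A *ᵥ (∑ j ∈ t, v j) = ∑ j ∈ t, A *ᵥ v j := by
  induction t using Finset.induction with
  | empty => simp
  | insert _ _ h ih => rw [Finset.sum_insert h, Finset.sum_insert h, mulVec_add, ih]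

lemma sum_mulVec' (t : Finset ℕ) (A : ℕ → Matrix (Fin n) (Fin n) ℝ)
    (v : Fin n → ℝ) : (∑ j ∈ t, A j) *ᵥ v = ∑ j ∈ t, A j *ᵥ v := by
  induction t using Finset.induction with
  | empty => simp [Matrix.zero_mulVec]
  | insert _ _ h ih => rw [Finset.sum_insert h, Finset.sum_insert h, add_mulVec, ih]

lemma dot_sum (t : Finset ℕ) (u : Fin n → ℝ) (v : ℕ → Fin n → ℝ) :
    u ⬝ᵥ (∑ j ∈ t, v j) = ∑ j ∈ t, u ⬝ᵥ v j := by
  induction t using Finset.induction with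
  | empty => simp
  | insert _ _ h ih => rw [Finset.sum_insert h, Finset.sum_insert h, dotProduct_add, ih]

variable (t : Finset ℕ) (s : ℕ → Fin n → ℝ) {lam : ℝ}
  {C : Matrix (Fin n) (Fin n) ℝ}

lemma Cexp (hC : C = lam • (1 : Matrix (Fin n) (Fin n) ℝ) + ∑ j ∈ t, vecMulVec (s j) (s j))
    (w : Fin n → ℝ) : C *ᵥ w = lam • w + ∑ j ∈ t, (s j ⬝ᵥ w) • s j := by
  rw [hC, add_mulVec, smul_mulVec, one_mulVec, sum_mulVec']
  congr 1
  exact Finset.sum_congr rfl fun j _ => vecMulVec_mulVec' _ _ _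

lemma Cquad (hC : C = lam • (1 : Matrix (Fin n) (Fin n) ℝ) + ∑ j ∈ t, vecMulVec (s j) (s j))
    (w : Fin n → ℝ) :
    w ⬝ᵥ (C *ᵥ w) = lam * (∑ i, w i ^ 2) + ∑ j ∈ t, (s j ⬝ᵥ w) ^ 2 := by
  rw [Cexp t s hC, dotProduct_add, dot_sum]
  congr 1
  · simp only [dotProduct_smul, smul_eq_mul, dotProduct, Finset.mul_sum, Pi.smul_apply]
    ring_nf
    exact Finset.sum_congr rfl fun i _ => mul_comm _ _
  · refine Finset.sum_congr rfl fun j _ => ?_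
    rw [dotProduct_smul, dotProduct_comm]
    simp [sq, smul_eq_mul]

lemma Cpd (hlam : 0 < lam)
    (hC : C = lam • (1 : Matrix (Fin n) (Fin n) ℝ) + ∑ j ∈ t, vecMulVec (s j) (s j)) :
    C.PosDef := by
  refine Matrix.PosDef.of_dotProduct_mulVec_pos ?_ ?_
  · rw [hC, Matrix.IsHermitian]
    ext i j
    simp only [conjTranspose_apply, Matrix.add_apply, Matrix.smul_apply, Matrix.one_apply,
      Matrix.sum_apply, vecMulVec_apply, star_trivial, smul_eq_mul]
    have h1 : (if j = i then (1:ℝ) else 0) = (if i = j then 1 else 0) := by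
      by_cases h : i = j
      · simp [h]
      · simp [h, Ne.symm h]
    rw [h1]
    congr 1
    exact Finset.sum_congr rfl fun _ _ => mul_comm _ _
  · intro w hw
    have h1 : (star w) ⬝ᵥ (C *ᵥ w) = w ⬝ᵥ (C *ᵥ w) := by simp
    rw [h1, Cquad t s hC]
    have h2 : 0 < ∑ i, w i ^ 2 := by
      have : ∃ i, w i ≠ 0 := by
        by_contra h
        push_neg at h
        exact hw (funext h)
      obtain ⟨i, hi⟩ := this
      refine lt_of_lt_of_le ?_ (Finset.single_le_sum (f := fun i => w i ^ 2)
        (fun i _ => sq_nonneg _) (Finset.mem_univ i))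
      positivity
    have h3 : 0 ≤ ∑ j ∈ t, (s j ⬝ᵥ w) ^ 2 := Finset.sum_nonneg fun _ _ => sq_nonneg _
    positivity

lemma dot_eq_trace (A : Matrix (Fin n) (Fin n) ℝ) (u : Fin n → ℝ) :
    u ⬝ᵥ (A *ᵥ u) = Matrix.trace (A * vecMulVec u u) := by
  simp only [Matrix.trace, Matrix.diag, Matrix.mul_apply, vecMulVec_apply, mulVec, dotProduct,
    Finset.mul_sum, Finset.sum_mul]
  exact Finset.sum_congr rfl fun i _ => Finset.sum_congr rfl fun j _ => by ring

lemma psd_diag_nonneg {A : Matrix (Fin n) (Fin n) ℝ} (hA : A.PosSemidef) (i : Fin n) :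
    0 ≤ A i i := by
  have := hA.dotProduct_mulVec_nonneg (Pi.single i 1)
  simpa [dotProduct, mulVec, Pi.single_apply, Finset.mul_sum] using this

lemma CinvC {C : Matrix (Fin n) (Fin n) ℝ} (hCpd : C.PosDef) (w : Fin n → ℝ) :
    C *ᵥ (C⁻¹ *ᵥ w) = w := by
  rw [mulVec_mulVec, Matrix.mul_nonsing_inv _ ((Matrix.isUnit_iff_isUnit_det C).1 hCpd.isUnit),
    one_mulVec]

lemma CCinv {C : Matrix (Fin n) (Fin n) ℝ} (hCpd : C.PosDef) (w : Fin n → ℝ) :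
    C⁻¹ *ᵥ (C *ᵥ w) = w := by
  rw [mulVec_mulVec, Matrix.nonsing_inv_mul _ ((Matrix.isUnit_iff_isUnit_det C).1 hCpd.isUnit),
    one_mulVec]

lemma invquad (hlam : 0 < lam)
    (hC : C = lam • (1 : Matrix (Fin n) (Fin n) ℝ) + ∑ j ∈ t, vecMulVec (s j) (s j))
    (v : Fin n → ℝ) : v ⬝ᵥ (C⁻¹ *ᵥ v) ≤ (∑ i, v i ^ 2) / lam := by
  have hCpd := Cpd t s hlam hC
  set w := C⁻¹ *ᵥ v with hw
  have hCw : C *ᵥ w = v := CinvC hCpd v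
  have hqd : w ⬝ᵥ (C *ᵥ w) = lam * (∑ i, w i ^ 2) + ∑ j ∈ t, (s j ⬝ᵥ w) ^ 2 := Cquad t s hC w
  have h1 : lam * (∑ i, w i ^ 2) ≤ w ⬝ᵥ v := by
    rw [← hCw, hqd]
    have : 0 ≤ ∑ j ∈ t, (s j ⬝ᵥ w) ^ 2 := Finset.sum_nonneg fun _ _ => sq_nonneg _
    linarith
  have hvw : v ⬝ᵥ w = w ⬝ᵥ v := dotProduct_comm _ _
  have hw2 : 0 ≤ ∑ i, w i ^ 2 := Finset.sum_nonneg fun _ _ => sq_nonneg _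
  have hq0 : 0 ≤ v ⬝ᵥ w := by rw [hvw]; nlinarith
  have h2 : (v ⬝ᵥ w) ^ 2 ≤ (∑ i, v i ^ 2) * (∑ i, w i ^ 2) :=
    sum_mul_sq_le_sq_mul_sq Finset.univ v w
  have hv2 : 0 ≤ ∑ i, v i ^ 2 := Finset.sum_nonneg fun _ _ => sq_nonneg _
  rw [le_div_iff₀ hlam]
  rcases eq_or_lt_of_le hq0 with h | h
  · rw [← h, zero_mul]; exact hv2
  · nlinarith

lemma trace_bound (hlam : 0 < lam)
    (hC : C = lam • (1 : Matrix (Fin n) (Fin n) ℝ) + ∑ j ∈ t, vecMulVec (s j) (s j)) :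
    ∑ j ∈ t, s j ⬝ᵥ (C⁻¹ *ᵥ s j) ≤ (n : ℝ) := by
  have hCpd := Cpd t s hlam hC
  have hinv : (C⁻¹).PosSemidef := hCpd.inv.posSemidef
  have h1 : ∑ j ∈ t, s j ⬝ᵥ (C⁻¹ *ᵥ s j)
      = Matrix.trace (C⁻¹ * ∑ j ∈ t, vecMulVec (s j) (s j)) := by
    rw [Finset.mul_sum, Matrix.trace_sum]
    exact Finset.sum_congr rfl fun j _ => dot_eq_trace _ _
  have h2 : (∑ j ∈ t, vecMulVec (s j) (s j)) = C - lam • 1 := by rw [hC]; abel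
  have h3 : C⁻¹ * (C - lam • (1 : Matrix (Fin n) (Fin n) ℝ)) = C⁻¹ * C - lam • C⁻¹ := by
    rw [Matrix.mul_sub, Matrix.mul_smul, Matrix.mul_one]
  have h4 : Matrix.trace (C⁻¹ * C) = (n : ℝ) := by
    rw [Matrix.nonsing_inv_mul _ ((Matrix.isUnit_iff_isUnit_det C).1 hCpd.isUnit),
      Matrix.trace_one]
    simp
  have h5 : 0 ≤ Matrix.trace C⁻¹ := by
    rw [Matrix.trace]
    exact Finset.sum_nonneg fun i _ => psd_diag_nonneg hinv i
  rw [h1, h2, h3, Matrix.trace_sub, Matrix.trace_smul, h4]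
  simp only [smul_eq_mul]
  nlinarith

end Aux

set_option maxHeartbeats 1000000 in
/-- Per-round instantaneous regret bound of the linear UCB action
(from the proof of Theorem 3.3). -/
theorem stmt_12 (d M k : ℕ) (hd : 1 ≤ d) (hM : 1 ≤ M) (hk : 1 ≤ k)
    (lam : ℝ) (hlam : 0 < lam)
    (f : (Fin d → ℝ) → ℝ) (gradf : (Fin d → ℝ) → Fin d → ℝ)
    (hdiff : Differentiable ℝ f)
    (hgrad : ∀ x v, fderiv ℝ f x v = gradf x ⬝ᵥ v)
    (x : ℕ → Fin d → ℝ) (hgx : gradf (x k) ≠ 0)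
    (s : ℕ → Fin d → ℝ)
    (hs : ∀ j ∈ Finset.Icc 1 (k - 1), euclNorm (s j) = 1)
    (C : Matrix (Fin d) (Fin d) ℝ) (b gk : Fin d → ℝ)
    (hC : C = lam • (1 : Matrix (Fin d) (Fin d) ℝ) +
      ∑ j ∈ Finset.Icc (max 1 (k - M - 1)) (k - 1), vecMulVec (s j) (s j))
    (hb : b = ∑ j ∈ Finset.Icc (max 1 (k - M - 1)) (k - 1), (gradf (x j) ⬝ᵥ s j) • s j)
    (hgk : gk = C⁻¹ *ᵥ b)
    (U : ℝ) (hU : euclNorm (gradf (x k)) ≤ U)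
    (sk : Fin d → ℝ) (hsk1 : euclNorm sk = 1)
    (hskmax : ∀ sv : Fin d → ℝ, euclNorm sv = 1 →
      gk ⬝ᵥ sv + Real.sqrt lam * U * Real.sqrt (sv ⬝ᵥ (C⁻¹ *ᵥ sv)) ≤
      gk ⬝ᵥ sk + Real.sqrt lam * U * Real.sqrt (sk ⬝ᵥ (C⁻¹ *ᵥ sk))) :
    ((euclNorm (gradf (x k)))⁻¹ • gradf (x k) - sk) ⬝ᵥ gradf (x k) ≤
      2 * (Real.sqrt ((d : ℝ) * ((M : ℝ) + 1) / lam) *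
        ∑ i ∈ Finset.Icc (max 1 (k - M - 1)) (k - 1),
          euclNorm (gradf (x (i + 1)) - gradf (x i))) +
      2 * Real.sqrt lam * U * Real.sqrt (sk ⬝ᵥ (C⁻¹ *ᵥ sk)) := by
  classical
  set ι := Finset.Icc (max 1 (k - M - 1)) (k - 1) with hι
  set g := gradf (x k) with hgdef
  set S := ∑ i ∈ ι, euclNorm (gradf (x (i + 1)) - gradf (x i)) with hSdef
  set β := Real.sqrt ((d : ℝ) * ((M : ℝ) + 1) / lam) * S with hβdef
  clear_value ι g S β
  have hCpd : C.PosDef := Cpd ι s hlam hC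
  have hCinv : (C⁻¹).PosDef := hCpd.inv
  have hCinvpsd : (C⁻¹).PosSemidef := hCinv.posSemidef
  have hqnn : ∀ v : Fin d → ℝ, 0 ≤ v ⬝ᵥ (C⁻¹ *ᵥ v) := fun v => by simpa using hCinvpsd.dotProduct_mulVec_nonneg v
  have hSnn : 0 ≤ S := by
    rw [hSdef]; exact Finset.sum_nonneg fun _ _ => euclNorm_nonneg _
  have hUnn : 0 ≤ U := le_trans (euclNorm_nonneg g) hU
  have hslam : Real.sqrt lam * Real.sqrt lam = lam := Real.mul_self_sqrt hlam.le
  have hslpos : 0 < Real.sqrt lam := Real.sqrt_pos.2 hlam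
  -- quadratic form bounds
  have hinvq : ∀ v : Fin d → ℝ, v ⬝ᵥ (C⁻¹ *ᵥ v) ≤ (∑ i, v i ^ 2) / lam :=
    invquad ι s hlam hC
  have hunitq : ∀ v : Fin d → ℝ, euclNorm v = 1 →
      Real.sqrt (v ⬝ᵥ (C⁻¹ *ᵥ v)) ≤ 1 / Real.sqrt lam := by
    intro v hv
    have h1 : (∑ i, v i ^ 2) = 1 := by rw [← euclNorm_sq, hv, one_pow]
    have := hinvq v
    rw [h1] at this
    calc Real.sqrt (v ⬝ᵥ (C⁻¹ *ᵥ v)) ≤ Real.sqrt (1 / lam) := Real.sqrt_le_sqrt this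
      _ = 1 / Real.sqrt lam := by rw [Real.sqrt_div' 1 hlam.le]; simp
  -- trace bound
  have htr : ∑ j ∈ ι, s j ⬝ᵥ (C⁻¹ *ᵥ s j) ≤ (d : ℝ) := trace_bound ι s hlam hC
  -- cardinality bound
  have hcard : (ι.card : ℝ) ≤ (M : ℝ) + 1 := by
    have h1 : ι.card ≤ M + 1 := by
      rw [hι, Nat.card_Icc]
      omega
    exact_mod_cast h1
  -- unit vectors in window
  have hsj : ∀ j ∈ ι, euclNorm (s j) = 1 := by
    intro j hj
    rw [hι, Finset.mem_Icc] at hj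
    exact hs j (Finset.mem_Icc.2 ⟨le_trans (le_max_left 1 _) hj.1, hj.2⟩)
  -- deviation bound
  have hcb : ∀ j ∈ ι, |(gradf (x j) - g) ⬝ᵥ s j| ≤ S := by
    intro j hj
    rw [hι, Finset.mem_Icc] at hj
    have hj1 : 1 ≤ j := le_trans (le_max_left 1 _) hj.1
    have hjk : j ≤ k := le_trans hj.2 (Nat.sub_le k 1)
    have h1 : |(gradf (x j) - g) ⬝ᵥ s j| ≤ euclNorm (gradf (x j) - g) * euclNorm (s j) :=
      abs_dot_le _ _
    rw [hsj j (by rw [hι, Finset.mem_Icc]; exact hj), mul_one] at h1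
    have h2 : euclNorm (gradf (x j) - g) ≤ S := by
      have h3 : euclNorm (gradf (x j) - g) = euclNorm (gradf (x (j + (k - j))) - gradf (x j)) := by
        rw [show j + (k - j) = k from by omega, ← hgdef, ← euclNorm_neg]
        congr 1
        abel
      rw [h3]
      calc euclNorm (gradf (x (j + (k - j))) - gradf (x j))
          ≤ ∑ i ∈ Finset.Ico j (j + (k - j)), euclNorm (gradf (x (i+1)) - gradf (x i)) :=
            telescope (fun m => gradf (x m)) j (k - j)
        _ ≤ S := by
            rw [hSdef]
            refine Finset.sum_le_sum_of_subset_of_nonneg ?_ fun _ _ _ => euclNorm_nonneg _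
            intro i hi
            rw [Finset.mem_Ico] at hi
            rw [hι, Finset.mem_Icc]
            exact ⟨le_trans hj.1 hi.1, by omega⟩
    linarith
  -- decomposition of g - gk
  have hdecomp : g - gk = C⁻¹ *ᵥ (lam • g) -
      ∑ j ∈ ι, ((gradf (x j) - g) ⬝ᵥ s j) • (C⁻¹ *ᵥ s j) := by
    have h0 : g = C⁻¹ *ᵥ (C *ᵥ g) := (CCinv hCpd g).symm
    have h1 : C *ᵥ g - b = lam • g - ∑ j ∈ ι, ((gradf (x j) - g) ⬝ᵥ s j) • s j := by
      rw [Cexp ι s hC, hb]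
      have he : ∀ j ∈ ι, ((gradf (x j) - g) ⬝ᵥ s j) • s j
          = (gradf (x j) ⬝ᵥ s j) • s j - (s j ⬝ᵥ g) • s j := by
        intro j _
        rw [sub_dotProduct, sub_smul, dotProduct_comm (s j) g]
      rw [Finset.sum_congr rfl he, Finset.sum_sub_distrib]
      abel
    calc g - gk = C⁻¹ *ᵥ (C *ᵥ g) - C⁻¹ *ᵥ b := by rw [← h0, hgk]
      _ = C⁻¹ *ᵥ (C *ᵥ g - b) := by rw [mulVec_sub]
      _ = C⁻¹ *ᵥ (lam • g - ∑ j ∈ ι, ((gradf (x j) - g) ⬝ᵥ s j) • s j) := by rw [h1]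
      _ = _ := by
          rw [mulVec_sub, mulVec_sum_vec]
          congr 1
          exact Finset.sum_congr rfl fun j _ => by rw [mulVec_smul]
  -- sum of sqrt bound
  have hsumb : ∑ j ∈ ι, Real.sqrt (s j ⬝ᵥ (C⁻¹ *ᵥ s j)) ≤
      Real.sqrt ((M:ℝ) + 1) * Real.sqrt (d : ℝ) := by
    have hcs2 := Real.sum_mul_le_sqrt_mul_sqrt ι (fun _ => (1:ℝ))
      (fun j => Real.sqrt (s j ⬝ᵥ (C⁻¹ *ᵥ s j)))
    simp only [one_mul, one_pow] at hcs2
    have e1 : ∑ j ∈ ι, Real.sqrt (s j ⬝ᵥ (C⁻¹ *ᵥ s j)) ^ 2 =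
        ∑ j ∈ ι, s j ⬝ᵥ (C⁻¹ *ᵥ s j) :=
      Finset.sum_congr rfl fun j _ => Real.sq_sqrt (hqnn _)
    rw [e1] at hcs2
    have e2 : ∑ _j ∈ ι, (1:ℝ) = (ι.card : ℝ) := by simp
    rw [e2] at hcs2
    refine le_trans hcs2 (mul_le_mul (Real.sqrt_le_sqrt hcard) (Real.sqrt_le_sqrt htr)
      (Real.sqrt_nonneg _) (Real.sqrt_nonneg _))
  -- the confidence bound
  have hconf : ∀ v : Fin d → ℝ, euclNorm v = 1 →
      |v ⬝ᵥ (g - gk)| ≤ β + Real.sqrt lam * U * Real.sqrt (v ⬝ᵥ (C⁻¹ *ᵥ v)) := by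
    intro v hv
    have hqv : Real.sqrt (v ⬝ᵥ (C⁻¹ *ᵥ v)) ≤ 1 / Real.sqrt lam := hunitq v hv
    have hqvnn : 0 ≤ Real.sqrt (v ⬝ᵥ (C⁻¹ *ᵥ v)) := Real.sqrt_nonneg _
    have hsplit : v ⬝ᵥ (g - gk) = lam * (v ⬝ᵥ (C⁻¹ *ᵥ g)) -
        ∑ j ∈ ι, ((gradf (x j) - g) ⬝ᵥ s j) * (v ⬝ᵥ (C⁻¹ *ᵥ s j)) := by
      rw [hdecomp, dotProduct_sub, dot_sum]
      congr 1
      · rw [mulVec_smul, dotProduct_smul, smul_eq_mul]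
      · exact Finset.sum_congr rfl fun j _ => by rw [dotProduct_smul, smul_eq_mul]
    -- term 1
    have ht1 : |lam * (v ⬝ᵥ (C⁻¹ *ᵥ g))| ≤ Real.sqrt lam * U * Real.sqrt (v ⬝ᵥ (C⁻¹ *ᵥ v)) := by
      have hcs := psd_cs hCinvpsd v g
      have hqg : Real.sqrt (g ⬝ᵥ (C⁻¹ *ᵥ g)) ≤ U / Real.sqrt lam := by
        calc Real.sqrt (g ⬝ᵥ (C⁻¹ *ᵥ g)) ≤ Real.sqrt ((∑ i, g i ^ 2) / lam) :=
            Real.sqrt_le_sqrt (hinvq g)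
          _ = euclNorm g / Real.sqrt lam := by
              rw [Real.sqrt_div (by positivity), euclNorm]
          _ ≤ U / Real.sqrt lam := by gcongr
      rw [abs_mul, abs_of_pos hlam]
      calc lam * |v ⬝ᵥ (C⁻¹ *ᵥ g)|
          ≤ lam * (Real.sqrt (v ⬝ᵥ (C⁻¹ *ᵥ v)) * Real.sqrt (g ⬝ᵥ (C⁻¹ *ᵥ g))) := by
            exact mul_le_mul_of_nonneg_left hcs hlam.le
        _ ≤ lam * (Real.sqrt (v ⬝ᵥ (C⁻¹ *ᵥ v)) * (U / Real.sqrt lam)) := by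
            refine mul_le_mul_of_nonneg_left ?_ hlam.le
            exact mul_le_mul_of_nonneg_left hqg hqvnn
        _ = Real.sqrt lam * U * Real.sqrt (v ⬝ᵥ (C⁻¹ *ᵥ v)) := by
            have hll : lam / Real.sqrt lam = Real.sqrt lam := by
              rw [div_eq_iff hslpos.ne']; exact hslam.symm
            rw [show lam * (Real.sqrt (v ⬝ᵥ (C⁻¹ *ᵥ v)) * (U / Real.sqrt lam)) =
              (lam / Real.sqrt lam) * U * Real.sqrt (v ⬝ᵥ (C⁻¹ *ᵥ v)) by ring, hll]
    -- term 2
    have ht2 : |∑ j ∈ ι, ((gradf (x j) - g) ⬝ᵥ s j) * (v ⬝ᵥ (C⁻¹ *ᵥ s j))| ≤ β := by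
      set Q := Real.sqrt (v ⬝ᵥ (C⁻¹ *ᵥ v)) with hQ
      have step1 : |∑ j ∈ ι, ((gradf (x j) - g) ⬝ᵥ s j) * (v ⬝ᵥ (C⁻¹ *ᵥ s j))|
          ≤ ∑ j ∈ ι, S * (Q * Real.sqrt (s j ⬝ᵥ (C⁻¹ *ᵥ s j))) := by
        refine le_trans (Finset.abs_sum_le_sum_abs _ _) (Finset.sum_le_sum fun j hj => ?_)
        rw [abs_mul]
        exact mul_le_mul (hcb j hj) (psd_cs hCinvpsd v (s j)) (abs_nonneg _) hSnn
      have step2 : ∑ j ∈ ι, S * (Q * Real.sqrt (s j ⬝ᵥ (C⁻¹ *ᵥ s j)))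
          = S * Q * ∑ j ∈ ι, Real.sqrt (s j ⬝ᵥ (C⁻¹ *ᵥ s j)) := by
        rw [Finset.mul_sum]
        exact Finset.sum_congr rfl fun j _ => by ring
      have hTnn : 0 ≤ ∑ j ∈ ι, Real.sqrt (s j ⬝ᵥ (C⁻¹ *ᵥ s j)) :=
        Finset.sum_nonneg fun _ _ => Real.sqrt_nonneg _
      have step3 : S * Q * ∑ j ∈ ι, Real.sqrt (s j ⬝ᵥ (C⁻¹ *ᵥ s j))
          ≤ S * (1 / Real.sqrt lam) * (Real.sqrt ((M:ℝ) + 1) * Real.sqrt (d : ℝ)) := by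
        have hb1 : S * Q ≤ S * (1 / Real.sqrt lam) := mul_le_mul_of_nonneg_left hqv hSnn
        have hb2 : 0 ≤ S * Q := mul_nonneg hSnn hqvnn
        have hb3 : 0 ≤ S * (1 / Real.sqrt lam) := by positivity
        exact mul_le_mul hb1 hsumb hTnn hb3
      have step4 : S * (1 / Real.sqrt lam) * (Real.sqrt ((M:ℝ) + 1) * Real.sqrt (d : ℝ)) = β := by
        rw [hβdef]
        rw [show (d : ℝ) * ((M:ℝ) + 1) / lam = (d : ℝ) * (((M:ℝ) + 1) * (1 / lam)) by
          field_simp]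
        rw [Real.sqrt_mul (by positivity), Real.sqrt_mul (by positivity),
          Real.sqrt_div' 1 hlam.le]
        simp only [Real.sqrt_one]
        ring
      linarith
    rw [hsplit]
    calc |lam * (v ⬝ᵥ (C⁻¹ *ᵥ g)) - ∑ j ∈ ι, ((gradf (x j) - g) ⬝ᵥ s j) * (v ⬝ᵥ (C⁻¹ *ᵥ s j))|
        ≤ |lam * (v ⬝ᵥ (C⁻¹ *ᵥ g))| +
          |∑ j ∈ ι, ((gradf (x j) - g) ⬝ᵥ s j) * (v ⬝ᵥ (C⁻¹ *ᵥ s j))| := abs_sub _ _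
      _ ≤ β + Real.sqrt lam * U * Real.sqrt (v ⬝ᵥ (C⁻¹ *ᵥ v)) := by linarith
  -- final assembly
  set sstar := (euclNorm g)⁻¹ • g with hsstar
  clear_value sstar
  have hgpos : 0 < euclNorm g := euclNorm_pos hgx
  have hstar1 : euclNorm sstar = 1 := by
    rw [hsstar, euclNorm_smul, abs_of_pos (inv_pos.2 hgpos), inv_mul_cancel₀ hgpos.ne']
  have h1 := hconf sstar hstar1
  have h2 := hconf sk hsk1
  have h3 := hskmax sstar hstar1
  have hid : (sstar - sk) ⬝ᵥ g =
      sstar ⬝ᵥ (g - gk) + (gk ⬝ᵥ sstar - gk ⬝ᵥ sk) + (-(sk ⬝ᵥ (g - gk))) := by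
    simp only [sub_dotProduct, dotProduct_sub]
    rw [dotProduct_comm gk sstar, dotProduct_comm gk sk]
    ring
  have ha1 : sstar ⬝ᵥ (g - gk) ≤ β + Real.sqrt lam * U * Real.sqrt (sstar ⬝ᵥ (C⁻¹ *ᵥ sstar)) :=
    le_trans (le_abs_self _) h1
  have ha2 : -(sk ⬝ᵥ (g - gk)) ≤ β + Real.sqrt lam * U * Real.sqrt (sk ⬝ᵥ (C⁻¹ *ᵥ sk)) :=
    le_trans (neg_le_abs _) h2
  have ha3 : gk ⬝ᵥ sstar - gk ⬝ᵥ sk ≤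
      Real.sqrt lam * U * Real.sqrt (sk ⬝ᵥ (C⁻¹ *ᵥ sk)) -
      Real.sqrt lam * U * Real.sqrt (sstar ⬝ᵥ (C⁻¹ *ᵥ sstar)) := by linarith
  rw [hid]
  linarith [ha1, ha2, ha3]
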